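/- Let p̂ satisfy the two-sided bound c/(β^{r/2}‖θ‖^r) ≤ p̂(θ) ≤ C/(β^{r/2}‖θ‖^r) with d > r ≥ 0. Then S(Δ) remains bounded as Δ → 0⁺: there exists a constant M (independent of Δ, depending only on c, C, β, d, r) with S(Δ) ≤ M for all Δ ∈ (0, π). -/

import Mathlib

open MeasureTheory

/-- In the fully coherent case `d > r`, the integral `S(Δ)` stays bounded as `Δ → 0⁺`. -/
theorem stmt_9 (d r : ℕ) (hd : 1 ≤ d) (hrd : r < d) (c C β : ℝ)
    (hc : 0 < c) (hcC : c ≤ C) (hβ : 0 < β)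
    (p : (Fin d → ℝ) → ℝ) (hmeas : Measurable p)
    (hbound : ∀ θ : Fin d → ℝ, θ ≠ 0 → (∀ i, |θ i| ≤ Real.pi) →
      c / (β ^ ((r : ℝ) / 2) * Real.sqrt (∑ i, (θ i) ^ 2) ^ r) ≤ p θ ∧
      p θ ≤ C / (β ^ ((r : ℝ) / 2) * Real.sqrt (∑ i, (θ i) ^ 2) ^ r)) :
    ∃ M : ℝ, ∀ Δ : ℝ, 0 < Δ → Δ < Real.pi →
      (∫ θ in {θ : Fin d → ℝ | ∀ i, Δ ≤ |θ i| ∧ |θ i| ≤ Real.pi}, p θ) ≤ M := by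
  have hπ := Real.pi_pos
  have hd0 : (0:ℝ) < d := by exact_mod_cast hd
  set a : ℝ := (r : ℝ) / d with ha_def
  have ha0 : 0 ≤ a := div_nonneg (Nat.cast_nonneg _) hd0.le
  have ha1 : a < 1 := (div_lt_one hd0).2 (by exact_mod_cast hrd)
  have had : a * (d : ℝ) = (r : ℝ) := div_mul_cancel₀ _ (ne_of_gt hd0)
  set κ : ℝ := C / β ^ ((r : ℝ) / 2) with hκ_def
  have hκ0 : 0 < κ := div_pos (lt_of_lt_of_le hc hcC) (Real.rpow_pos_of_pos hβ _)
  set f : ℝ → ℝ := Set.indicator (Set.Icc (-Real.pi) Real.pi) (fun t => |t| ^ (-a)) with hf_def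
  have hf_nonneg : ∀ t, 0 ≤ f t := fun t =>
    Set.indicator_nonneg (fun t _ => Real.rpow_nonneg (abs_nonneg t) _) t
  -- integrability of `f`
  have h1 : IntervalIntegrable (fun t : ℝ => |t| ^ (-a)) volume 0 Real.pi := by
    have h := intervalIntegral.intervalIntegrable_rpow' (a := 0) (b := Real.pi) (by linarith : (-1:ℝ) < -a)
    rw [intervalIntegrable_iff] at h ⊢
    refine h.congr_fun ?_ measurableSet_uIoc
    intro t ht
    rw [Set.uIoc_of_le hπ.le] at ht
    simp only []
    rw [abs_of_pos ht.1]
  have h2 : IntervalIntegrable (fun t : ℝ => |t| ^ (-a)) volume (-Real.pi) 0 := by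
    simpa [abs_neg] using ((IntervalIntegrable.iff_comp_neg (f := fun t : ℝ => |t| ^ (-a)) (a := 0) (b := Real.pi) (by simp)).1 h1).symm
  have hf_int : Integrable f := by
    rw [hf_def, integrable_indicator_iff measurableSet_Icc]
    exact (intervalIntegrable_iff_integrableOn_Icc_of_le (by linarith)).1 (h2.trans h1)
  set G : (Fin d → ℝ) → ℝ := fun θ => κ * ∏ i, f (θ i) with hG_def
  have hG_int : Integrable G := (Integrable.fintype_prod (fun _ : Fin d => hf_int)).const_mul κ
  have hG_nonneg : ∀ θ, 0 ≤ G θ :=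
    fun θ => mul_nonneg hκ0.le (Finset.prod_nonneg fun i _ => hf_nonneg _)
  refine ⟨∫ θ, G θ, fun Δ hΔ hΔπ => ?_⟩
  set S := {θ : Fin d → ℝ | ∀ i, Δ ≤ |θ i| ∧ |θ i| ≤ Real.pi} with hS_def
  have hS : MeasurableSet S := by
    have hset : MeasurableSet {t : ℝ | Δ ≤ |t| ∧ |t| ≤ Real.pi} :=
      ((isClosed_le continuous_const continuous_abs).inter
        (isClosed_le continuous_abs continuous_const)).measurableSet
    have : S = ⋂ i, (fun θ : Fin d → ℝ => θ i) ⁻¹' {t : ℝ | Δ ≤ |t| ∧ |t| ≤ Real.pi} := by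
      ext θ; simp [hS_def, Set.mem_iInter]
    rw [this]
    exact MeasurableSet.iInter fun i => (measurable_pi_apply i) hset
  let i0 : Fin d := ⟨0, hd⟩
  -- pointwise facts on `S`
  have key : ∀ θ ∈ S, 0 ≤ p θ ∧ p θ ≤ G θ := by
    intro θ hθ
    have hθpos : ∀ i, 0 < |θ i| := fun i => lt_of_lt_of_le hΔ (hθ i).1
    have hθne : θ ≠ 0 := by
      intro h
      have := hθpos i0
      rw [h] at this; simp at this
    have habs : ∀ i, |θ i| ≤ Real.pi := fun i => (hθ i).2
    set N : ℝ := Real.sqrt (∑ i, (θ i) ^ 2) with hN_def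
    have hsum : 0 < ∑ i, (θ i) ^ 2 := by
      refine Finset.sum_pos' (fun i _ => sq_nonneg _) ⟨i0, Finset.mem_univ _, ?_⟩
      exact (sq_abs (θ i0)) ▸ pow_pos (hθpos i0) 2
    have hN : 0 < N := Real.sqrt_pos.2 hsum
    have hle : ∀ i, |θ i| ≤ N := by
      intro i
      rw [← Real.sqrt_sq_eq_abs]
      exact Real.sqrt_le_sqrt (Finset.single_le_sum (f := fun i => (θ i) ^ 2)
        (fun i _ => sq_nonneg _) (Finset.mem_univ i))
    have hbd := hbound θ hθne habs
    have hden : 0 < β ^ ((r : ℝ) / 2) * N ^ r :=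
      mul_pos (Real.rpow_pos_of_pos hβ _) (pow_pos hN r)
    constructor
    · exact le_trans (le_of_lt (div_pos hc hden)) hbd.1
    · have hprodpos : 0 < ∏ i, |θ i| ^ a :=
        Finset.prod_pos fun i _ => Real.rpow_pos_of_pos (hθpos i) _
      have hprod : ∏ i, |θ i| ^ a ≤ N ^ r := by
        calc ∏ i, |θ i| ^ a ≤ ∏ _i : Fin d, N ^ a :=
              Finset.prod_le_prod (fun i _ => Real.rpow_nonneg (abs_nonneg _) _)
                (fun i _ => Real.rpow_le_rpow (abs_nonneg _) (hle i) ha0)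
          _ = (N ^ a) ^ (d : ℕ) := by
              rw [Finset.prod_const, Finset.card_univ, Fintype.card_fin]
          _ = N ^ r := by
              rw [← Real.rpow_natCast (N ^ a) d, ← Real.rpow_mul hN.le, had, Real.rpow_natCast]
      have hfθ : ∀ i, f (θ i) = |θ i| ^ (-a) := by
        intro i
        exact Set.indicator_of_mem (Set.mem_Icc.2 (abs_le.1 (habs i))) _
      calc p θ ≤ C / (β ^ ((r : ℝ) / 2) * N ^ r) := hbd.2
        _ = κ * (N ^ r)⁻¹ := by rw [div_mul_eq_div_div, div_eq_mul_inv]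
        _ ≤ κ * (∏ i, |θ i| ^ a)⁻¹ := by
            apply mul_le_mul_of_nonneg_left _ hκ0.le
            exact inv_anti₀ hprodpos hprod
        _ = G θ := by
            rw [hG_def]
            simp only [hfθ]
            rw [← Finset.prod_inv_distrib]
            congr 1
            exact Finset.prod_congr rfl fun i _ =>
              (Real.rpow_neg (abs_nonneg _) a).symm
  have hpS : IntegrableOn p S := by
    refine Integrable.mono' hG_int.integrableOn hmeas.aestronglyMeasurable.restrict ?_
    filter_upwards [ae_restrict_mem hS] with θ hθ
    rw [Real.norm_eq_abs, abs_of_nonneg (key θ hθ).1]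
    exact (key θ hθ).2
  calc (∫ θ in S, p θ) ≤ ∫ θ in S, G θ :=
        setIntegral_mono_on hpS hG_int.integrableOn hS (fun θ hθ => (key θ hθ).2)
    _ ≤ ∫ θ, G θ := setIntegral_le_integral hG_int (Filter.Eventually.of_forall hG_nonneg)
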